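/- Let σ > 0, t > 0, Δ ≥ 0, μ ≥ 0, and let ε be a real random variable with law N(0, σ²). Define f_{t,Δ}(z, μ) = | −max(−(z+t),0) − μ | · 1{z < 0} + | max(z − t − Δ, 0) − μ | · 1{z > 0}. Then E[ f_{t,Δ}(ε + μ, μ)² ] ≤ min{ 2E(ε − t)₊² + μ², σ² + (t + Δ)² }. -/

import Mathlib

open MeasureTheory ProbabilityTheory Real Set

instance gaussianReal_sq_isProb (σ : ℝ) :
    IsProbabilityMeasure (gaussianReal 0 ⟨σ ^ 2, sq_nonneg σ⟩) :=
  instIsProbabilityMeasureGaussianReal _ _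

lemma gvar_ne_zero {σ : ℝ} (hσ : 0 < σ) : (⟨σ ^ 2, sq_nonneg σ⟩ : NNReal) ≠ 0 := by
  exact fun h => (pow_pos hσ 2).ne' (congrArg Subtype.val h)

lemma gpdf_eq {σ : ℝ} (x : ℝ) :
    gaussianPDFReal 0 ⟨σ ^ 2, sq_nonneg σ⟩ x
      = (√(2 * π * σ ^ 2))⁻¹ * rexp (-(2 * σ ^ 2)⁻¹ * x ^ 2) := by
  unfold gaussianPDFReal
  show (√(2 * π * σ ^ 2))⁻¹ * rexp (-(x - 0) ^ 2 / (2 * σ ^ 2)) = _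
  simp only [NNReal.coe_mk, sub_zero]
  congr 1
  ring_nf

lemma integral_gaussian_eq {σ : ℝ} (hσ : 0 < σ) (g : ℝ → ℝ) :
    ∫ x, g x ∂(gaussianReal 0 ⟨σ ^ 2, sq_nonneg σ⟩)
      = ∫ x, gaussianPDFReal 0 ⟨σ ^ 2, sq_nonneg σ⟩ x * g x := by
  rw [gaussianReal_of_var_ne_zero _ (gvar_ne_zero hσ)]
  have h : (gaussianPDF 0 ⟨σ ^ 2, sq_nonneg σ⟩)
      = fun x => ((gaussianPDFReal 0 ⟨σ ^ 2, sq_nonneg σ⟩ x).toNNReal : ENNReal) := rfl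
  rw [h]
  erw [integral_withDensity_eq_integral_smul
    (measurable_gaussianPDFReal _ _).real_toNNReal g]
  refine integral_congr_ae (Filter.Eventually.of_forall fun x => ?_)
  simp only [NNReal.smul_def, smul_eq_mul, Real.coe_toNNReal _ (gaussianPDFReal_nonneg _ _ _)]
  exact congrArg (· * g x) (Real.coe_toNNReal _ (gaussianPDFReal_nonneg 0 _ x))

lemma integrable_gaussian_iff {σ : ℝ} (hσ : 0 < σ) (g : ℝ → ℝ) :
    Integrable g (gaussianReal 0 ⟨σ ^ 2, sq_nonneg σ⟩)
      ↔ Integrable (fun x => gaussianPDFReal 0 ⟨σ ^ 2, sq_nonneg σ⟩ x * g x) volume := by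
  rw [gaussianReal_of_var_ne_zero _ (gvar_ne_zero hσ)]
  have h : (gaussianPDF 0 ⟨σ ^ 2, sq_nonneg σ⟩)
      = fun x => ((gaussianPDFReal 0 ⟨σ ^ 2, sq_nonneg σ⟩ x).toNNReal : ENNReal) := rfl
  rw [h]
  erw [integrable_withDensity_iff_integrable_smul
    (measurable_gaussianPDFReal _ _).real_toNNReal]
  constructor <;> intro hI <;> refine hI.congr (Filter.Eventually.of_forall fun x => ?_) <;>
    simp [NNReal.smul_def, Real.coe_toNNReal _ (gaussianPDFReal_nonneg _ _ _)]
  all_goals exact Or.inl (gaussianPDFReal_nonneg _ _ _)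

lemma integrable_sq_exp {b : ℝ} (hb : 0 < b) :
    Integrable (fun x : ℝ => x ^ 2 * rexp (-b * x ^ 2)) := by
  refine (integrable_rpow_mul_exp_neg_mul_sq hb (s := 2) (by norm_num)).congr
    (Filter.Eventually.of_forall fun x => ?_)
  simp only [show ((2:ℝ)) = ((2:ℕ):ℝ) by norm_num, rpow_natCast, sq_abs]

lemma integral_sq_exp {b : ℝ} (hb : 0 < b) :
    ∫ x : ℝ, x ^ 2 * rexp (-b * x ^ 2) = √π / 2 * b ^ (-(3:ℝ)/2) := by
  have h0 : ∫ x : ℝ, x ^ 2 * rexp (-b * x ^ 2)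
      = 2 * ∫ x in Ioi (0:ℝ), x ^ 2 * rexp (-b * x ^ 2) := by
    have := integral_comp_abs (f := fun x : ℝ => x ^ 2 * rexp (-b * x ^ 2))
    simp only [sq_abs] at this
    exact this
  have h1 : ∫ x in Ioi (0:ℝ), x ^ 2 * rexp (-b * x ^ 2)
      = ∫ x in Ioi (0:ℝ), x ^ (2:ℝ) * rexp (-b * x ^ (2:ℝ)) := by
    refine setIntegral_congr_fun measurableSet_Ioi fun x hx => ?_
    rw [show ((2:ℝ)) = ((2:ℕ):ℝ) by norm_num, rpow_natCast]
  rw [h0, h1, integral_rpow_mul_exp_neg_mul_rpow two_pos (by norm_num) hb,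
    show ((2:ℝ) + 1) / 2 = 1/2 + 1 by norm_num,
    Real.Gamma_add_one (by norm_num), Real.Gamma_one_half_eq,
    show -((2:ℝ) + 1) / 2 = -(3:ℝ)/2 by norm_num]
  ring

lemma integrable_sq_gaussian {σ : ℝ} (hσ : 0 < σ) :
    Integrable (fun x => x ^ 2) (gaussianReal 0 ⟨σ ^ 2, sq_nonneg σ⟩) := by
  rw [integrable_gaussian_iff hσ]
  have hb : (0:ℝ) < (2 * σ ^ 2)⁻¹ := by positivity
  refine ((integrable_sq_exp hb).const_mul (√(2 * π * σ ^ 2))⁻¹).congr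
    (Filter.Eventually.of_forall fun x => ?_)
  simp only [gpdf_eq]
  ring

lemma integral_sq_gaussian {σ : ℝ} (hσ : 0 < σ) :
    ∫ x, x ^ 2 ∂(gaussianReal 0 ⟨σ ^ 2, sq_nonneg σ⟩) = σ ^ 2 := by
  have hb : (0:ℝ) < (2 * σ ^ 2)⁻¹ := by positivity
  rw [integral_gaussian_eq hσ]
  have h : ∫ x, gaussianPDFReal 0 ⟨σ ^ 2, sq_nonneg σ⟩ x * x ^ 2
      = (√(2 * π * σ ^ 2))⁻¹ * ∫ x, x ^ 2 * rexp (-(2 * σ ^ 2)⁻¹ * x ^ 2) := by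
    rw [← integral_const_mul]
    refine integral_congr_ae (Filter.Eventually.of_forall fun x => ?_)
    simp only [gpdf_eq]; ring
  rw [h, integral_sq_exp hb]
  have h2 : ((2 * σ ^ 2)⁻¹ : ℝ) ^ (-(3:ℝ)/2) = (2 * σ ^ 2) * √(2 * σ ^ 2) := by
    rw [show (-(3:ℝ)/2) = -(3/2) by norm_num, Real.rpow_neg (by positivity),
      Real.inv_rpow (by positivity), inv_inv,
      show ((3:ℝ)/2) = 1 + 1/2 by norm_num, Real.rpow_add (by positivity),
      Real.rpow_one, ← Real.sqrt_eq_rpow]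
  have h3 : √(2 * π * σ ^ 2) = √π * √(2 * σ ^ 2) := by
    rw [show 2 * π * σ ^ 2 = π * (2 * σ ^ 2) by ring, Real.sqrt_mul pi_pos.le]
  rw [h2, h3]
  have hπ : √π ≠ 0 := by positivity
  have hs : √(2 * σ ^ 2) ≠ 0 := by positivity
  field_simp

lemma map_neg_gaussian {σ : ℝ} :
    (gaussianReal 0 ⟨σ ^ 2, sq_nonneg σ⟩).map (fun x => -x)
      = gaussianReal 0 ⟨σ ^ 2, sq_nonneg σ⟩ := by
  have h := gaussianReal_map_const_mul (μ := 0) (v := ⟨σ ^ 2, sq_nonneg σ⟩) (-1)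
  have h1 : (NNReal.mk ((-1:ℝ) ^ 2) (sq_nonneg _)) = 1 := by
    apply NNReal.coe_injective
    norm_num
  rw [h1] at h
  erw [one_mul, mul_zero] at h
  rw [← h]
  congr 1
  funext x
  exact (neg_one_mul x).symm

lemma integral_symm_gaussian {σ : ℝ} {g : ℝ → ℝ} (hg : Measurable g) :
    ∫ x, g (-x) ∂(gaussianReal 0 ⟨σ ^ 2, sq_nonneg σ⟩)
      = ∫ x, g x ∂(gaussianReal 0 ⟨σ ^ 2, sq_nonneg σ⟩) := by
  conv_rhs => rw [← map_neg_gaussian (σ := σ)]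
  rw [integral_map measurable_neg.aemeasurable hg.aestronglyMeasurable]

lemma integrable_id_gaussian {σ : ℝ} (hσ : 0 < σ) :
    Integrable (fun x => x) (gaussianReal 0 ⟨σ ^ 2, sq_nonneg σ⟩) := by
  have h1 : Integrable (fun x : ℝ => 1 + x ^ 2) (gaussianReal 0 ⟨σ ^ 2, sq_nonneg σ⟩) :=
    (integrable_const 1).add (integrable_sq_gaussian hσ)
  refine h1.mono' measurable_id.aestronglyMeasurable (Filter.Eventually.of_forall fun x => ?_)
  rw [Real.norm_eq_abs]
  nlinarith [sq_abs x, sq_nonneg (|x| - 1), abs_nonneg x]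

lemma integral_id_gaussian {σ : ℝ} (hσ : 0 < σ) :
    ∫ x, x ∂(gaussianReal 0 ⟨σ ^ 2, sq_nonneg σ⟩) = 0 := by
  have h := integral_symm_gaussian (σ := σ) (g := fun x : ℝ => x) measurable_id
  have h2 : ∫ x, -x ∂(gaussianReal 0 ⟨σ ^ 2, sq_nonneg σ⟩)
      = - ∫ x, x ∂(gaussianReal 0 ⟨σ ^ 2, sq_nonneg σ⟩) := integral_neg fun x => x
  linarith

lemma integrable_shift_sq_gaussian {σ : ℝ} (hσ : 0 < σ) (c : ℝ) :
    Integrable (fun x => (x - c) ^ 2) (gaussianReal 0 ⟨σ ^ 2, sq_nonneg σ⟩) := by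
  have h1 : Integrable (fun x : ℝ => x ^ 2 + ((-2 * c) * x + c ^ 2))
      (gaussianReal 0 ⟨σ ^ 2, sq_nonneg σ⟩) :=
    (integrable_sq_gaussian hσ).add (((integrable_id_gaussian hσ).const_mul _).add (integrable_const _))
  exact h1.congr (Filter.Eventually.of_forall fun x => by ring)

lemma integral_shift_sq_gaussian {σ : ℝ} (hσ : 0 < σ) (c : ℝ) :
    ∫ x, (x - c) ^ 2 ∂(gaussianReal 0 ⟨σ ^ 2, sq_nonneg σ⟩) = σ ^ 2 + c ^ 2 := by
  have h : (fun x : ℝ => (x - c) ^ 2) = fun x => x ^ 2 + ((-2 * c) * x + c ^ 2) := by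
    funext x; ring
  have hI : Integrable (fun x : ℝ => (-2 * c) * x + c ^ 2)
      (gaussianReal 0 ⟨σ ^ 2, sq_nonneg σ⟩) :=
    ((integrable_id_gaussian hσ).const_mul _).add (integrable_const _)
  have hI2 : Integrable (fun x : ℝ => (-2 * c) * x) (gaussianReal 0 ⟨σ ^ 2, sq_nonneg σ⟩) :=
    (integrable_id_gaussian hσ).const_mul _
  rw [h, integral_add (integrable_sq_gaussian hσ) hI,
    integral_add hI2 (integrable_const _),
    integral_const_mul, integral_id_gaussian hσ, integral_sq_gaussian hσ, integral_const]
  simp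

lemma integrable_maxsq_gaussian {σ : ℝ} (hσ : 0 < σ) (a : ℝ) :
    Integrable (fun x => (max (x - a) 0) ^ 2) (gaussianReal 0 ⟨σ ^ 2, sq_nonneg σ⟩) := by
  refine (integrable_shift_sq_gaussian hσ a).mono'
    (((measurable_id.sub_const a).max measurable_const).pow_const 2).aestronglyMeasurable
    (Filter.Eventually.of_forall fun x => ?_)
  rw [Real.norm_eq_abs, abs_of_nonneg (sq_nonneg _)]
  rcases le_total (x - a) 0 with h | h
  · rw [max_eq_right h]; nlinarith [sq_nonneg (x - a)]
  · rw [max_eq_left h]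

lemma integrable_maxsq_gaussian' {σ : ℝ} (hσ : 0 < σ) (a : ℝ) :
    Integrable (fun x => (max (-(x + a)) 0) ^ 2) (gaussianReal 0 ⟨σ ^ 2, sq_nonneg σ⟩) := by
  refine (integrable_shift_sq_gaussian hσ (-a)).mono'
    ((((measurable_id.add_const a).neg).max measurable_const).pow_const 2).aestronglyMeasurable
    (Filter.Eventually.of_forall fun x => ?_)
  rw [Real.norm_eq_abs, abs_of_nonneg (sq_nonneg _)]
  rcases le_total (-(x + a)) 0 with h | h
  · rw [max_eq_right h]; nlinarith [sq_nonneg (x - -a)]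
  · rw [max_eq_left h]; nlinarith [sq_nonneg (x + a)]

lemma pointwise_two (t Δ μ : ℝ) (ht : 0 < t) (hΔ : 0 ≤ Δ) (hμ : 0 ≤ μ) (x : ℝ)
    (F : ℝ) (hF : F = (if x + μ < 0 then |(-(max (-(x + μ + t)) 0)) - μ| else 0)
        + (if 0 < x + μ then |max (x + μ - t - Δ) 0 - μ| else 0)) :
    F ^ 2 ≤ (x - (t + Δ)) ^ 2 := by
  rcases lt_trichotomy (x + μ) 0 with h | h | h
  · rw [hF, if_pos h, if_neg (by linarith), add_zero, sq_abs]
    rcases le_total (-(x + μ + t)) 0 with hm | hm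
    · rw [max_eq_right hm]
      nlinarith
    · rw [max_eq_left hm]
      nlinarith
  · rw [hF, if_neg (by linarith), if_neg (by linarith), add_zero]
    nlinarith [sq_nonneg (x - (t + Δ))]
  · rw [hF, if_neg (by linarith), if_pos h, zero_add, sq_abs]
    rcases le_total (x + μ - t - Δ) 0 with hm | hm
    · rw [max_eq_right hm]
      nlinarith
    · rw [max_eq_left hm]
      nlinarith

lemma pointwise_one (t Δ μ : ℝ) (ht : 0 < t) (hΔ : 0 ≤ Δ) (hμ : 0 ≤ μ) (x : ℝ)
    (F : ℝ) (hF : F = (if x + μ < 0 then |(-(max (-(x + μ + t)) 0)) - μ| else 0)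
        + (if 0 < x + μ then |max (x + μ - t - Δ) 0 - μ| else 0)) :
    F ^ 2 ≤ (max (x - t) 0) ^ 2 + (max (-(x + t)) 0) ^ 2 + μ ^ 2 := by
  have h1 : (0:ℝ) ≤ max (x - t) 0 := le_max_right _ _
  have h2 : (0:ℝ) ≤ max (-(x + t)) 0 := le_max_right _ _
  have h3 : x - t ≤ max (x - t) 0 := le_max_left _ _
  have h4 : -(x + t) ≤ max (-(x + t)) 0 := le_max_left _ _
  rcases lt_trichotomy (x + μ) 0 with h | h | h
  · rw [hF, if_pos h, if_neg (by linarith), add_zero, sq_abs]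
    rcases le_total (-(x + μ + t)) 0 with hm | hm
    · rw [max_eq_right hm]
      nlinarith
    · rw [max_eq_left hm]
      nlinarith [mul_nonneg (by linarith : (0:ℝ) ≤ max (-(x + t)) 0 + (x + t))
        (by linarith : (0:ℝ) ≤ max (-(x + t)) 0 - (x + t))]
  · rw [hF, if_neg (by linarith), if_neg (by linarith), add_zero]
    nlinarith [sq_nonneg (max (x - t) 0), sq_nonneg (max (-(x + t)) 0), sq_nonneg μ]
  · rw [hF, if_neg (by linarith), if_pos h, zero_add, sq_abs]
    rcases le_total (x + μ - t - Δ) 0 with hm | hm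
    · rw [max_eq_right hm]
      nlinarith
    · rw [max_eq_left hm]
      rcases le_total (x - (t + Δ)) 0 with hx | hx
      · nlinarith
      · nlinarith [mul_nonneg (by linarith : (0:ℝ) ≤ max (x - t) 0 + (x - t - Δ))
          (by linarith : (0:ℝ) ≤ max (x - t) 0 - (x - t - Δ))]

/-- second-moment bound for the auxiliary function `f_{t,Δ}` at a shifted
Gaussian: `E[f_{t,Δ}(ε+μ, μ)²] ≤ min{2E(ε-t)₊² + μ², σ² + (t+Δ)²}`. -/
theorem f_tDelta_second_moment_bound (σ t Δ μ : ℝ)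
    (hσ : 0 < σ) (ht : 0 < t) (hΔ : 0 ≤ Δ) (hμ : 0 ≤ μ)
    (f : ℝ → ℝ → ℝ)
    (hf : ∀ zz m, f zz m =
      (if zz < 0 then |(-(max (-(zz + t)) 0)) - m| else 0)
        + (if 0 < zz then |max (zz - t - Δ) 0 - m| else 0)) :
    (∫ x, (f (x + μ) μ) ^ 2 ∂(gaussianReal 0 ⟨σ ^ 2, sq_nonneg σ⟩)) ≤
      min (2 * (∫ x, (max (x - t) 0) ^ 2 ∂(gaussianReal 0 ⟨σ ^ 2, sq_nonneg σ⟩)) + μ ^ 2)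
          (σ ^ 2 + (t + Δ) ^ 2) := by
  have hFeq : ∀ x : ℝ, f (x + μ) μ
      = (if x + μ < 0 then |(-(max (-(x + μ + t)) 0)) - μ| else 0)
        + (if 0 < x + μ then |max (x + μ - t - Δ) 0 - μ| else 0) := fun x => hf (x + μ) μ
  have hFmeas : Measurable fun x : ℝ => f (x + μ) μ := by
    have h : (fun x : ℝ => f (x + μ) μ) = fun x =>
        (if x + μ < 0 then |(-(max (-(x + μ + t)) 0)) - μ| else 0)
          + (if 0 < x + μ then |max (x + μ - t - Δ) 0 - μ| else 0) := funext hFeq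
    rw [h]
    apply Measurable.add
    · refine Measurable.ite
        (measurableSet_lt (measurable_id.add_const μ) measurable_const) ?_ measurable_const
      exact ((((((measurable_id.add_const μ).add_const t).neg.max
        measurable_const).neg).sub_const μ).abs)
    · refine Measurable.ite
        (measurableSet_lt measurable_const (measurable_id.add_const μ)) ?_ measurable_const
      exact (((((measurable_id.add_const μ).sub_const t).sub_const Δ).max
        measurable_const).sub_const μ).abs
  have hP2 : ∀ x : ℝ, f (x + μ) μ ^ 2 ≤ (x - (t + Δ)) ^ 2 :=
    fun x => pointwise_two t Δ μ ht hΔ hμ x _ (hFeq x)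
  have hP1 : ∀ x : ℝ, f (x + μ) μ ^ 2
      ≤ (max (x - t) 0) ^ 2 + ((max (-(x + t)) 0) ^ 2 + μ ^ 2) := by
    intro x
    have := pointwise_one t Δ μ ht hΔ hμ x _ (hFeq x)
    linarith
  have hIsh := integrable_shift_sq_gaussian hσ (t + Δ)
  have hFint : Integrable (fun x => f (x + μ) μ ^ 2) (gaussianReal 0 ⟨σ ^ 2, sq_nonneg σ⟩) := by
    refine hIsh.mono' ((hFmeas.pow_const 2).aestronglyMeasurable)
      (Filter.Eventually.of_forall fun x => ?_)
    rw [Real.norm_eq_abs, abs_of_nonneg (sq_nonneg _)]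
    exact hP2 x
  have hI1 := integrable_maxsq_gaussian hσ t
  have hI2 := integrable_maxsq_gaussian' hσ t
  refine le_min ?_ ?_
  · have hsym : ∫ x, (max (-(x + t)) 0) ^ 2 ∂(gaussianReal 0 ⟨σ ^ 2, sq_nonneg σ⟩)
        = ∫ x, (max (x - t) 0) ^ 2 ∂(gaussianReal 0 ⟨σ ^ 2, sq_nonneg σ⟩) := by
      have hmeas : Measurable fun y : ℝ => (max (y - t) 0) ^ 2 :=
        ((measurable_id.sub_const t).max measurable_const).pow_const 2
      have h := integral_symm_gaussian (σ := σ) hmeas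
      rw [← h]
      refine integral_congr_ae (Filter.Eventually.of_forall fun x => ?_)
      show (max (-(x + t)) 0) ^ 2 = (max (-x - t) 0) ^ 2
      rw [show -(x + t) = -x - t by ring]
    have step : ∫ x, f (x + μ) μ ^ 2 ∂(gaussianReal 0 ⟨σ ^ 2, sq_nonneg σ⟩)
        ≤ ∫ x, ((max (x - t) 0) ^ 2 + ((max (-(x + t)) 0) ^ 2 + μ ^ 2))
            ∂(gaussianReal 0 ⟨σ ^ 2, sq_nonneg σ⟩) :=
      integral_mono hFint (hI1.add (hI2.add (integrable_const _))) hP1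
    have hI3 : Integrable (fun x : ℝ => (max (-(x + t)) 0) ^ 2 + μ ^ 2)
        (gaussianReal 0 ⟨σ ^ 2, sq_nonneg σ⟩) := hI2.add (integrable_const _)
    rw [integral_add hI1 hI3,
      integral_add hI2 (integrable_const _), integral_const] at step
    simp only [measure_univ, probReal_univ, ENNReal.toReal_one, one_smul, smul_eq_mul, one_mul] at step
    rw [hsym] at step
    linarith
  · have step : ∫ x, f (x + μ) μ ^ 2 ∂(gaussianReal 0 ⟨σ ^ 2, sq_nonneg σ⟩)
        ≤ ∫ x, (x - (t + Δ)) ^ 2 ∂(gaussianReal 0 ⟨σ ^ 2, sq_nonneg σ⟩) :=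
      integral_mono hFint hIsh hP2
    rw [integral_shift_sq_gaussian hσ (t + Δ)] at step
    exact step
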